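/- Let 0 < p < 1, let L_i ≥ 2 be an integer, let J be a finite nonempty set with integers L_j ≥ 2 for j ∈ J, let α ≥ 0 and λ, θ ∈ ℝ, and let h : ℕ → ℝ be nondecreasing and bounded. Define the Bellman operator (T h)(v) := (1−p)·h(v+1) + min( Q_i(v), min_{j ∈ J} Q_j(v) ), where Q_i(v) := α(v·L_i + L_i(L_i−1)/(2p)) + (λ−θ)·L_i + p·∑_{l} p_l^{(L_i)} h(l) and Q_j(v) := α(v·L_j + L_j(L_j−1)/(2p)) − θ·L_j + p·∑_{l} p_l^{(L_j)} h(v+l). Then T h is nondecreasing on ℕ. -/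

import Mathlib

/-- Shifted negative-binomial pmf. -/
noncomputable def pnb (p : ℝ) (L l : ℕ) : ℝ :=
  if L ≤ l then ((l - 2).choose (L - 2) : ℝ) * p ^ (L - 1) * (1 - p) ^ (l - L) else 0

lemma pnb_nonneg {p : ℝ} (hp0 : 0 ≤ p) (hp1 : p ≤ 1) (L l : ℕ) : 0 ≤ pnb p L l := by
  unfold pnb
  split
  · have : (0:ℝ) ≤ 1 - p := by linarith
    positivity
  · exact le_refl 0

lemma pnb_summable {p : ℝ} (hp0 : 0 < p) (hp1 : p < 1) (L : ℕ) :
    Summable (fun l => pnb p L l) := by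
  have h1p : (0:ℝ) < 1 - p := by linarith
  have hg : Summable (fun l : ℕ => (((l + (L-2)).choose (L-2) : ℕ) : ℝ) * (1-p)^l *
      (p^(L-1) / (1-p)^L)) := by
    apply Summable.mul_right
    exact summable_choose_mul_geometric_of_norm_lt_one (L-2)
      (by rw [Real.norm_eq_abs, abs_of_pos h1p]; linarith)
  apply Summable.of_nonneg_of_le (fun l => pnb_nonneg hp0.le hp1.le L l) _ hg
  intro l
  unfold pnb
  split
  · rename_i hl
    have hpow : (1-p) ^ (l - L) = (1-p)^l / (1-p)^L := pow_sub₀ _ (ne_of_gt h1p) hl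
    rw [hpow]
    have hc : ((l - 2).choose (L - 2) : ℝ) ≤ (((l + (L-2)).choose (L-2) : ℕ) : ℝ) := by
      exact_mod_cast Nat.choose_le_choose (L-2) (by omega)
    have h2 : (0:ℝ) < (1-p)^L := pow_pos h1p L
    calc ((l - 2).choose (L - 2) : ℝ) * p ^ (L - 1) * ((1-p)^l / (1-p)^L)
        ≤ (((l + (L-2)).choose (L-2) : ℕ) : ℝ) * p ^ (L - 1) * ((1-p)^l / (1-p)^L) := by
          apply mul_le_mul_of_nonneg_right (mul_le_mul_of_nonneg_right hc (by positivity))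
          positivity
      _ = (((l + (L-2)).choose (L-2) : ℕ) : ℝ) * (1-p)^l * (p^(L-1) / (1-p)^L) := by ring
  · positivity

lemma pnb_mul_summable {p : ℝ} (hp0 : 0 < p) (hp1 : p < 1) (L : ℕ)
    (g : ℕ → ℝ) {M : ℝ} (hM : ∀ n, |g n| ≤ M) :
    Summable (fun l => pnb p L l * g l) := by
  apply Summable.of_norm_bounded ((pnb_summable hp0 hp1 L).mul_right M)
  intro l
  rw [Real.norm_eq_abs, abs_mul, abs_of_nonneg (pnb_nonneg hp0.le hp1.le L l)]
  exact mul_le_mul_of_nonneg_left (hM l) (pnb_nonneg hp0.le hp1.le L l)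

/-- The Bellman operator of the single-source average-cost SMDP preserves
monotonicity: if the bias `h` is nondecreasing and bounded, then `T h` is
nondecreasing. -/
theorem bellman_operator_monotone (p : ℝ) (hp0 : 0 < p) (hp1 : p < 1)
    (Li : ℕ) (hLi : 2 ≤ Li)
    {ι : Type*} [Fintype ι] [Nonempty ι] (Lc : ι → ℕ) (hLc : ∀ j, 2 ≤ Lc j)
    (α lam θ : ℝ) (hα : 0 ≤ α)
    (h : ℕ → ℝ) (hmono : Monotone h) (hbdd : ∃ M : ℝ, ∀ n, |h n| ≤ M) :
    Monotone (fun v : ℕ =>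
      (1 - p) * h (v + 1) +
        min
          (α * ((v : ℝ) * (Li : ℝ) + (Li : ℝ) * ((Li : ℝ) - 1) / (2 * p))
            + (lam - θ) * (Li : ℝ) + p * ∑' l : ℕ, pnb p Li l * h l)
          (Finset.univ.inf' Finset.univ_nonempty (fun j : ι =>
            α * ((v : ℝ) * (Lc j : ℝ) + (Lc j : ℝ) * ((Lc j : ℝ) - 1) / (2 * p))
              - θ * (Lc j : ℝ) + p * ∑' l : ℕ, pnb p (Lc j) l * h (v + l)))) := by
  obtain ⟨M, hM⟩ := hbdd
  intro v w hvw
  dsimp only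
  apply add_le_add
  · exact mul_le_mul_of_nonneg_left (hmono (by omega)) (by linarith)
  · apply min_le_min
    · have : α * ((v : ℝ) * (Li : ℝ) + (Li : ℝ) * ((Li : ℝ) - 1) / (2 * p))
          ≤ α * ((w : ℝ) * (Li : ℝ) + (Li : ℝ) * ((Li : ℝ) - 1) / (2 * p)) := by
        apply mul_le_mul_of_nonneg_left _ hα
        have : (v:ℝ) ≤ (w:ℝ) := by exact_mod_cast hvw
        have : (0:ℝ) ≤ (Li:ℝ) := by positivity
        nlinarith
      linarith
    · apply Finset.le_inf'
      intro j hj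
      refine le_trans (Finset.inf'_le _ hj) ?_
      have h1 : α * ((v : ℝ) * (Lc j : ℝ) + (Lc j : ℝ) * ((Lc j : ℝ) - 1) / (2 * p))
          ≤ α * ((w : ℝ) * (Lc j : ℝ) + (Lc j : ℝ) * ((Lc j : ℝ) - 1) / (2 * p)) := by
        apply mul_le_mul_of_nonneg_left _ hα
        have : (v:ℝ) ≤ (w:ℝ) := by exact_mod_cast hvw
        have : (0:ℝ) ≤ (Lc j:ℝ) := by positivity
        nlinarith
      have h2 : (∑' l : ℕ, pnb p (Lc j) l * h (v + l))
          ≤ ∑' l : ℕ, pnb p (Lc j) l * h (w + l) := by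
        apply Summable.tsum_le_tsum
        · intro l
          exact mul_le_mul_of_nonneg_left (hmono (by omega)) (pnb_nonneg hp0.le hp1.le _ l)
        · exact pnb_mul_summable hp0 hp1 _ (fun l => h (v + l)) (fun l => hM (v + l))
        · exact pnb_mul_summable hp0 hp1 _ (fun l => h (w + l)) (fun l => hM (w + l))
      nlinarith
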